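/- For all natural numbers m, n, the following identity of formal power series over ℤ holds: (2 - X)^n = (1 - X)^{m+n+1} · Σ_{k≥0} C(m + k, n, k) · X^k. Equivalently, (2-x)^n/(1-x)^{m+n+1} = Σ_{k≥0} C(m+k, n, k) x^k. -/

import Mathlib

open Finset

/-- The set of ternary words of length `m + n` (as functions `Fin (m+n) → Fin 3`)
having exactly `k` letters equal to `2` and no letter equal to `0` among the
first `m` letters. -/
def ternaryWords (m n k : ℕ) : Finset (Fin (m + n) → Fin 3) :=
  univ.filter fun w =>
    (univ.filter fun i => w i = 2).card = k ∧ ∀ i : Fin (m + n), (i : ℕ) < m → w i ≠ 0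

/-- `C m n k` is the number of ternary words of length `m + n` with exactly `k`
twos and no zero among the first `m` letters; it equals the inset number
`{m,n choose k}` of Janjić–Petković. -/
def C (m n k : ℕ) : ℕ := (ternaryWords m n k).card

lemma card_filter_cons {L : ℕ} (P : (Fin (L+1) → Fin 3) → Prop) [DecidablePred P] :
    (univ.filter P).card = ∑ a : Fin 3, (univ.filter fun v : Fin L → Fin 3 => P (Fin.cons a v)).card := by
  rw [Finset.card_eq_sum_card_fiberwise (f := fun w => w 0) (t := univ) (fun _ _ => mem_univ _)]
  refine Finset.sum_congr rfl fun a _ => ?_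
  refine Finset.card_bij' (fun w _ => Fin.tail w) (fun v _ => Fin.cons a v) ?_ ?_ ?_ ?_
  · intro w hw
    simp only [mem_filter, mem_univ, true_and] at hw ⊢
    obtain ⟨h1, h2⟩ := hw
    subst h2
    rw [Fin.cons_self_tail]
    exact h1
  · intro v hv
    simp only [mem_filter, mem_univ, true_and] at hv ⊢
    exact ⟨hv, Fin.cons_zero _ _⟩
  · intro w hw
    simp only [mem_filter, mem_univ, true_and] at hw
    obtain ⟨h1, h2⟩ := hw
    subst h2
    exact Fin.cons_self_tail w
  · intro v _
    simp [Fin.tail_cons]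

lemma card_filter_snoc {L : ℕ} (P : (Fin (L+1) → Fin 3) → Prop) [DecidablePred P] :
    (univ.filter P).card = ∑ a : Fin 3, (univ.filter fun v : Fin L → Fin 3 => P (Fin.snoc v a)).card := by
  rw [Finset.card_eq_sum_card_fiberwise (f := fun w => w (Fin.last L)) (t := univ) (fun _ _ => mem_univ _)]
  refine Finset.sum_congr rfl fun a _ => ?_
  refine Finset.card_bij' (fun w _ => Fin.init w) (fun v _ => Fin.snoc v a) ?_ ?_ ?_ ?_
  · intro w hw
    simp only [mem_filter, mem_univ, true_and] at hw ⊢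
    obtain ⟨h1, h2⟩ := hw
    subst h2
    rw [Fin.snoc_init_self]
    exact h1
  · intro v hv
    simp only [mem_filter, mem_univ, true_and] at hv ⊢
    exact ⟨hv, Fin.snoc_last _ _⟩
  · intro w hw
    simp only [mem_filter, mem_univ, true_and] at hw
    obtain ⟨h1, h2⟩ := hw
    subst h2
    exact Fin.snoc_init_self w
  · intro v _
    simp [Fin.init_snoc]

/-- Words of length `L` with `k` twos and no zero among the first `m` letters. -/
def D (L m k : ℕ) : Finset (Fin L → Fin 3) :=
  univ.filter fun w =>
    (univ.filter fun i => w i = 2).card = k ∧ ∀ i : Fin L, (i : ℕ) < m → w i ≠ 0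

def c (L m k : ℕ) : ℕ := (D L m k).card

lemma count_cons {L : ℕ} (a : Fin 3) (v : Fin L → Fin 3) :
    (univ.filter fun i : Fin (L+1) => (Fin.cons a v : Fin (L+1) → Fin 3) i = 2).card
      = (if a = 2 then 1 else 0) + (univ.filter fun i => v i = 2).card := by
  rw [Finset.card_filter, Finset.card_filter, Fin.sum_univ_succ]
  simp

lemma count_snoc {L : ℕ} (a : Fin 3) (v : Fin L → Fin 3) :
    (univ.filter fun i : Fin (L+1) => (Fin.snoc v a : Fin (L+1) → Fin 3) i = 2).card
      = (univ.filter fun i => v i = 2).card + (if a = 2 then 1 else 0) := by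
  rw [Finset.card_filter, Finset.card_filter, Fin.sum_univ_castSucc]
  simp [add_comm]

lemma constraint_cons {L : ℕ} (a : Fin 3) (v : Fin L → Fin 3) (m : ℕ) :
    (∀ i : Fin (L+1), (i : ℕ) < m+1 → (Fin.cons a v : Fin (L+1) → Fin 3) i ≠ 0)
      ↔ (a ≠ 0 ∧ ∀ j : Fin L, (j : ℕ) < m → v j ≠ 0) := by
  rw [Fin.forall_fin_succ]
  simp [Nat.succ_lt_succ_iff]

lemma constraint_snoc {L : ℕ} (a : Fin 3) (v : Fin L → Fin 3) {m : ℕ} (h : m ≤ L) :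
    (∀ i : Fin (L+1), (i : ℕ) < m → (Fin.snoc v a : Fin (L+1) → Fin 3) i ≠ 0)
      ↔ (∀ j : Fin L, (j : ℕ) < m → v j ≠ 0) := by
  constructor
  · intro H j hj
    have := H j.castSucc (by simpa using hj)
    simpa using this
  · intro H i hi
    induction i using Fin.lastCases with
    | last => simp at hi; omega
    | cast j => simpa using H j (by simpa using hi)

lemma recA (L m k : ℕ) : c (L+1) (m+1) (k+1) = c L m (k+1) + c L m k := by
  unfold c D
  rw [card_filter_cons, Fin.sum_univ_three]
  simp only [count_cons, constraint_cons]
  simp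
  congr 1
  ext v
  simp only [mem_filter, mem_univ, true_and]
  constructor <;> rintro ⟨h1, h2⟩ <;> exact ⟨by omega, h2⟩

lemma recA0 (L m : ℕ) : c (L+1) (m+1) 0 = c L m 0 := by
  unfold c D
  rw [card_filter_cons, Fin.sum_univ_three]
  simp only [count_cons, constraint_cons]
  simp

lemma recB {L m : ℕ} (h : m ≤ L) (k : ℕ) :
    c (L+1) m (k+1) = 2 * c L m (k+1) + c L m k := by
  unfold c D
  rw [card_filter_snoc, Fin.sum_univ_three]
  simp only [count_snoc, constraint_snoc (h := h)]
  simp only [show ((0:Fin 3) = 2) = False from by simp, show ((1:Fin 3) = 2) = False from by simp,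
    show ((2:Fin 3) = 2) = True from by simp, if_false, if_true, add_zero,
    Nat.add_right_cancel_iff]
  ring

lemma recB0 {L m : ℕ} (h : m ≤ L) : c (L+1) m 0 = 2 * c L m 0 := by
  unfold c D
  rw [card_filter_snoc, Fin.sum_univ_three]
  simp only [count_snoc, constraint_snoc (h := h)]
  simp only [show ((0:Fin 3) = 2) = False from by simp, show ((1:Fin 3) = 2) = False from by simp,
    show ((2:Fin 3) = 2) = True from by simp, if_false, if_true, add_zero,
    Nat.add_one_ne_zero, false_and, Finset.filter_false, Finset.card_empty]
  ring

lemma c_eq_zero {L m k : ℕ} (h : L < k) : c L m k = 0 := by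
  rw [c, Finset.card_eq_zero, Finset.eq_empty_iff_forall_notMem]
  intro w hw
  rw [D, mem_filter] at hw
  have h2 := hw.2.1
  have h3 : (univ.filter fun i => w i = 2).card ≤ L := by
    simpa using Finset.card_le_univ (univ.filter fun i => w i = 2)
  omega

lemma c_diag (L : ℕ) : c L L L = 1 := by
  induction L with
  | zero => decide
  | succ L ih =>
    rw [recA, c_eq_zero (Nat.lt_succ_self L), ih]

lemma C_eq_c (m n k : ℕ) : C m n k = c (m + n) m k := rfl

lemma C_recA (m n k : ℕ) : C (m+1) n (k+1) = C m n (k+1) + C m n k := by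
  rw [C_eq_c, C_eq_c, C_eq_c, show (m+1)+n = (m+n)+1 from Nat.succ_add m n]
  exact recA (m+n) m k

lemma C_recA0 (m n : ℕ) : C (m+1) n 0 = C m n 0 := by
  rw [C_eq_c, C_eq_c, show (m+1)+n = (m+n)+1 from Nat.succ_add m n]
  exact recA0 (m+n) m

lemma C_recB (m n k : ℕ) : C m (n+1) (k+1) = 2 * C m n (k+1) + C m n k := by
  rw [C_eq_c, C_eq_c, C_eq_c]
  exact recB (Nat.le_add_right m n) k

lemma C_recB0 (m n : ℕ) : C m (n+1) 0 = 2 * C m n 0 := by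
  rw [C_eq_c, C_eq_c]
  exact recB0 (Nat.le_add_right m n)

lemma C_diag (k : ℕ) : C k 0 k = 1 := by
  rw [C_eq_c, Nat.add_zero]
  exact c_diag k

/-- Generating function of `C (m+k) n k`. -/
def F (m n : ℕ) : PowerSeries ℤ := PowerSeries.mk fun k => (C (m + k) n k : ℤ)

lemma L1 (m n : ℕ) : (1 - PowerSeries.X) * F (m+1) n = F m n := by
  ext k
  rw [sub_mul, one_mul, map_sub]
  cases k with
  | zero =>
    simp only [PowerSeries.coeff_zero_X_mul, F, PowerSeries.coeff_mk, sub_zero]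
    rw [show m+1+0 = m+0+1 from rfl, show (m+0+1 : ℕ) = (m+0)+1 from rfl]
    exact_mod_cast congrArg (Nat.cast (R := ℤ)) (C_recA0 (m+0) n)
  | succ k =>
    rw [PowerSeries.coeff_succ_X_mul]
    simp only [F, PowerSeries.coeff_mk]
    rw [show m+1+(k+1) = (m+k+1)+1 from by omega, show m+1+k = m+k+1 from by omega,
      show m+(k+1) = m+k+1 from by omega]
    rw [C_recA (m+k+1) n k]
    push_cast
    ring

lemma L2 (m n : ℕ) : F m (n+1) = F m n + F m n + PowerSeries.X * F (m+1) n := by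
  ext k
  rw [map_add, map_add]
  cases k with
  | zero =>
    simp only [PowerSeries.coeff_zero_X_mul, F, PowerSeries.coeff_mk, add_zero]
    rw [C_recB0 m n]
    push_cast
    ring
  | succ k =>
    rw [PowerSeries.coeff_succ_X_mul]
    simp only [F, PowerSeries.coeff_mk]
    rw [C_recB (m+(k+1)) n k, show m+1+k = m+(k+1) from by omega]
    push_cast
    ring

lemma main : ∀ n m : ℕ, (2 - PowerSeries.X : PowerSeries ℤ) ^ n
    = (1 - PowerSeries.X) ^ (m + n + 1) * F m n := by
  intro n
  induction n with
  | zero =>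
    intro m
    induction m with
    | zero =>
      have h1 : (1 - PowerSeries.X : PowerSeries ℤ) * F 0 0 = 1 := by
        ext k
        rw [sub_mul, one_mul, map_sub]
        cases k with
        | zero =>
          simp [F, PowerSeries.coeff_zero_X_mul, PowerSeries.coeff_mk, C_diag]
        | succ k =>
          rw [PowerSeries.coeff_succ_X_mul]
          simp [F, PowerSeries.coeff_mk, C_diag]
      rw [pow_zero, show (0+0+1 : ℕ) = 1 from rfl, pow_one, h1]
    | succ m ih =>
      have : ((1 - PowerSeries.X) ^ (m + 1 + 0 + 1) * F (m+1) 0 : PowerSeries ℤ)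
          = (1 - PowerSeries.X) ^ (m + 0 + 1) * ((1 - PowerSeries.X) * F (m+1) 0) := by
        ring
      rw [this, L1, ← ih]
  | succ n ih =>
    intro m
    have h1 := ih m
    have h2 := ih (m+1)
    rw [L2]
    linear_combination (2 - 2 * PowerSeries.X : PowerSeries ℤ) * h1
      + (PowerSeries.X : PowerSeries ℤ) * h2

theorem stmt_17 (m n : ℕ) :
    (2 - PowerSeries.X : PowerSeries ℤ) ^ n =
      (1 - PowerSeries.X) ^ (m + n + 1) *
        PowerSeries.mk (fun k => (C (m + k) n k : ℤ)) := by
  exact main n m
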